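/- Let G be a finite group and let ρ: G → ℝ be a probability density on G (ρ ≥ 0 and ∑_{x∈G} ρ(x) = 1). Define ρ_Y(y) = ∑_{x∈G} ρ(x)ρ(y⁻¹x) for y ∈ G, and set S = ρ_Y(e) = ∑_{x∈G} ρ(x)², where e is the identity of G. Let α ≥ 1 and define A = {x ∈ G : ρ_Y(x) ≥ S/α}. Let B ⊆ A be a subset and β > 0 a real number with |B| ≥ 1/(β·S). Then ∑_{x∈G} r_B(x)² ≥ |B|³/(4α⁹β⁴), where r_B(x) = #{(a,b) ∈ B×B : ab⁻¹ = x}. -/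

import Mathlib

open Finset in
open scoped Classical in
/-- Counting helper: the sum of squared fiber sizes of `f` on `s` equals the number of
pairs in `s × s` on which `f` agrees. -/
lemma sum_sq_card_fiber_eq {α γ : Type*} [Fintype γ]
    (s : Finset α) (f : α → γ) :
    ∑ u : γ, (s.filter fun a => f a = u).card ^ 2
      = ((s ×ˢ s).filter fun p : α × α => f p.1 = f p.2).card := by
  rw [Finset.card_eq_sum_card_fiberwise
    (f := fun p : α × α => f p.1) (t := Finset.univ) (fun x _ => Finset.mem_univ _)]
  refine (Finset.sum_congr rfl fun u _ => ?_).symm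
  have h : ((s ×ˢ s).filter fun p : α × α => f p.1 = f p.2).filter
        (fun p : α × α => f p.1 = u)
      = (s.filter fun a => f a = u) ×ˢ (s.filter fun a => f a = u) := by
    ext p
    simp only [Finset.mem_filter, Finset.mem_product, Finset.filter_filter]
    constructor
    · rintro ⟨⟨h1, h2⟩, h3, h4⟩
      exact ⟨⟨h1, h4⟩, h2, h3 ▸ h4⟩
    · rintro ⟨⟨h1, h2⟩, h3, h4⟩
      exact ⟨⟨h1, h3⟩, h2.trans h4.symm, h2⟩
  rw [h, Finset.card_product, sq]

set_option maxHeartbeats 2000000 in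
open scoped Classical in
/-- If `ρ` is a probability density on a finite group `G`, `ρ_Y(y) = ∑_x ρ(x)ρ(y⁻¹x)`,
`S = ρ_Y(e) = ∑_x ρ(x)²`, `A = {x : ρ_Y(x) ≥ S/α}` for some `α ≥ 1`, and `B ⊆ A` with
`|B| ≥ 1/(βS)` for some `β > 0`, then the representation function `r_B` of `B·B⁻¹`
satisfies `∑_x r_B(x)² ≥ |B|³/(4α⁹β⁴)`. -/
theorem energy_of_popular_set {G : Type*} [Group G] [Fintype G]
    (ρ : G → ℝ) (hρ0 : ∀ x, 0 ≤ ρ x) (hρ1 : ∑ x, ρ x = 1)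
    (ρY : G → ℝ) (hρY : ∀ y, ρY y = ∑ x, ρ x * ρ (y⁻¹ * x))
    (S : ℝ) (hS : S = ρY 1) (hS' : S = ∑ x, ρ x ^ 2)
    (α : ℝ) (hα : 1 ≤ α)
    (A : Finset G) (hA : A = Finset.univ.filter fun x => S / α ≤ ρY x)
    (B : Finset G) (hBA : B ⊆ A) (β : ℝ) (hβ : 0 < β)
    (hB : 1 / (β * S) ≤ (B.card : ℝ))
    (rB : G → ℕ)
    (hrB : ∀ x : G, rB x = ((B ×ˢ B).filter fun q : G × G => q.1 * q.2⁻¹ = x).card) :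
    (B.card : ℝ) ^ 3 / (4 * α ^ 9 * β ^ 4) ≤ ∑ x, (rB x : ℝ) ^ 2 := by
  have hαpos : (0:ℝ) < α := lt_of_lt_of_le one_pos hα
  -- S > 0
  have hSpos : 0 < S := by
    rw [hS']
    have hne : ∃ x, ρ x ≠ 0 := by
      by_contra h
      push_neg at h
      simp [h] at hρ1
    obtain ⟨x0, hx0⟩ := hne
    have h1 : 0 < ρ x0 ^ 2 := by positivity
    exact lt_of_lt_of_le h1
      (Finset.single_le_sum (fun i _ => sq_nonneg (ρ i)) (Finset.mem_univ x0))
  have hρY0 : ∀ y, 0 ≤ ρY y := fun y => by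
    rw [hρY]
    exact Finset.sum_nonneg fun x _ => mul_nonneg (hρ0 x) (hρ0 _)
  -- ∑ ρY = 1
  have hρYsum : ∑ y, ρY y = 1 := by
    simp_rw [hρY]
    rw [Finset.sum_comm]
    have key : ∀ x : G, ∑ y : G, ρ x * ρ (y⁻¹ * x) = ρ x := by
      intro x
      rw [← Finset.mul_sum]
      have h2 : ∑ y : G, ρ (y⁻¹ * x) = 1 := by
        rw [← hρ1]
        exact Equiv.sum_comp ((Equiv.inv G).trans (Equiv.mulRight x)) ρ
      rw [h2, mul_one]
    simp_rw [key]
    exact hρ1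
  -- ρY ≤ S pointwise
  have hρYle : ∀ y, ρY y ≤ S := by
    intro y
    have h2 : (∑ x, ρ x * ρ (y⁻¹ * x)) ^ 2
        ≤ (∑ x, ρ x ^ 2) * ∑ x, ρ (y⁻¹ * x) ^ 2 :=
      Finset.sum_mul_sq_le_sq_mul_sq _ _ _
    have h3 : ∑ x : G, ρ (y⁻¹ * x) ^ 2 = ∑ x, ρ x ^ 2 :=
      Equiv.sum_comp (Equiv.mulLeft y⁻¹) (fun x => ρ x ^ 2)
    rw [h3, ← hS', ← sq] at h2
    rw [hρY]
    exact le_of_pow_le_pow_left₀ two_ne_zero hSpos.le h2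
  have hmemA : ∀ x ∈ A, S / α ≤ ρY x := by
    intro x hx
    rw [hA, Finset.mem_filter] at hx
    exact hx.2
  -- |A| ≤ α / S and hence 1 ≤ α β
  have hAcard : (A.card : ℝ) * (S / α) ≤ 1 := by
    have h1 : ∑ x ∈ A, ρY x ≤ ∑ x, ρY x :=
      Finset.sum_le_sum_of_subset_of_nonneg (Finset.subset_univ A)
        (fun i _ _ => hρY0 i)
    have h2 : A.card • (S / α) ≤ ∑ x ∈ A, ρY x :=
      Finset.card_nsmul_le_sum A ρY (S / α) hmemA
    rw [nsmul_eq_mul] at h2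
    linarith [hρYsum ▸ h1]
  have hBpos : 0 < (B.card : ℝ) := lt_of_lt_of_le (by positivity) hB
  have hαβ : 1 ≤ α * β := by
    have hcard : (B.card : ℝ) ≤ (A.card : ℝ) :=
      Nat.cast_le.mpr (Finset.card_le_card hBA)
    have h1 : 1 / (β * S) ≤ (A.card : ℝ) := hB.trans hcard
    rw [div_le_iff₀ (by positivity)] at h1
    have hAcard' : (A.card : ℝ) * S ≤ α := by
      have h2 : (A.card : ℝ) * (S / α) * α ≤ 1 * α :=
        mul_le_mul_of_nonneg_right hAcard hαpos.le
      calc (A.card : ℝ) * S = (A.card : ℝ) * (S / α) * α := by field_simp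
        _ ≤ 1 * α := h2
        _ = α := one_mul α
    nlinarith [hSpos, hβ]
  have hβS : 1 ≤ β * S * (B.card : ℝ) := by
    rw [div_le_iff₀ (by positivity)] at hB
    linarith
  set n : ℝ := (B.card : ℝ) with hn
  -- Step 1 : n * (S/α) ≤ ∑_{x ∈ B} ρY x
  have hstep1 : n * (S / α) ≤ ∑ x ∈ B, ρY x := by
    have h2 : B.card • (S / α) ≤ ∑ x ∈ B, ρY x :=
      Finset.card_nsmul_le_sum B ρY (S / α) (fun x hx => hmemA x (hBA hx))
    rwa [nsmul_eq_mul] at h2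
  -- T = ∑_{x,y ∈ B} ρY (x⁻¹ y)
  set T : ℝ := ∑ p ∈ B ×ˢ B, ρY (p.1⁻¹ * p.2) with hT
  have hpt : ∀ x y : G, ρY (x⁻¹ * y) = ∑ z : G, ρ (x⁻¹ * z) * ρ (y⁻¹ * z) := by
    intro x y
    rw [hρY, ← Equiv.sum_comp (Equiv.mulLeft x)
      (fun z => ρ (x⁻¹ * z) * ρ (y⁻¹ * z))]
    refine Finset.sum_congr rfl fun w _ => ?_
    simp [mul_inv_rev, mul_assoc]
  have hstep2 : (∑ x ∈ B, ρY x) ^ 2 ≤ S * T := by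
    have hrw : ∑ x ∈ B, ρY x = ∑ z : G, ρ z * (∑ x ∈ B, ρ (x⁻¹ * z)) := by
      simp_rw [hρY, Finset.mul_sum]
      rw [Finset.sum_comm]
    have cs := Finset.sum_mul_sq_le_sq_mul_sq Finset.univ ρ
      (fun z => ∑ x ∈ B, ρ (x⁻¹ * z))
    have hg : ∑ z : G, (∑ x ∈ B, ρ (x⁻¹ * z)) ^ 2 = T := by
      have : ∀ z : G, (∑ x ∈ B, ρ (x⁻¹ * z)) ^ 2
          = ∑ p ∈ B ×ˢ B, ρ (p.1⁻¹ * z) * ρ (p.2⁻¹ * z) := by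
        intro z
        rw [sq, Finset.sum_mul_sum, ← Finset.sum_product']
      simp_rw [this]
      rw [hT, Finset.sum_comm]
      exact Finset.sum_congr rfl fun p _ => (hpt p.1 p.2).symm
    rw [hrw]
    calc (∑ z : G, ρ z * (∑ x ∈ B, ρ (x⁻¹ * z))) ^ 2
        ≤ (∑ z, ρ z ^ 2) * ∑ z : G, (∑ x ∈ B, ρ (x⁻¹ * z)) ^ 2 := cs
      _ = S * T := by rw [← hS', hg]
  -- n² S ≤ α² T
  have hTlb : n ^ 2 * S ≤ α ^ 2 * T := by
    have h0 : 0 ≤ n * (S / α) := by positivity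
    have h1 : (n * (S / α)) ^ 2 ≤ S * T :=
      le_trans (pow_le_pow_left₀ h0 hstep1 2) hstep2
    have h2 : n ^ 2 * S ^ 2 ≤ α ^ 2 * (S * T) := by
      have := mul_le_mul_of_nonneg_left h1 (le_of_lt (by positivity : (0:ℝ) < α ^ 2))
      calc n ^ 2 * S ^ 2 = α ^ 2 * (n * (S / α)) ^ 2 := by field_simp
        _ ≤ α ^ 2 * (S * T) := this
    nlinarith [hSpos]
  have hTpos : 0 < T := by
    have h1 : 0 < n ^ 2 * S := by positivity
    have h2 : 0 < α ^ 2 := by positivity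
    nlinarith
  -- fiber decomposition of T
  have hTfib : T = ∑ u : G,
      (((B ×ˢ B).filter fun p : G × G => p.1⁻¹ * p.2 = u).card : ℝ) * ρY u := by
    rw [hT, ← Finset.sum_fiberwise (B ×ˢ B) (fun p : G × G => p.1⁻¹ * p.2)
      (fun p => ρY (p.1⁻¹ * p.2))]
    refine Finset.sum_congr rfl fun u _ => ?_
    rw [Finset.sum_congr rfl (fun p hp => by
      rw [(Finset.mem_filter.mp hp).2]), Finset.sum_const, nsmul_eq_mul]
  -- Cauchy–Schwarz on the fibers
  set E' : ℝ := ∑ u : G,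
      (((B ×ˢ B).filter fun p : G × G => p.1⁻¹ * p.2 = u).card : ℝ) ^ 2 with hE'
  have hcs2 : T ^ 2 ≤ E' * ∑ u : G, ρY u ^ 2 := by
    rw [hTfib]
    exact Finset.sum_mul_sq_le_sq_mul_sq _ _ _
  have hρYsq : ∑ u : G, ρY u ^ 2 ≤ S := by
    calc ∑ u : G, ρY u ^ 2 ≤ ∑ u : G, S * ρY u :=
          Finset.sum_le_sum fun u _ => by nlinarith [hρYle u, hρY0 u]
      _ = S := by rw [← Finset.mul_sum, hρYsum, mul_one]
  have hE'0 : 0 ≤ E' := Finset.sum_nonneg fun u _ => sq_nonneg _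
  have hET : T ^ 2 ≤ E' * S :=
    hcs2.trans (mul_le_mul_of_nonneg_left hρYsq hE'0)
  -- E' equals the energy ∑ rB²
  set E : ℝ := ∑ x, (rB x : ℝ) ^ 2 with hE
  have hEE' : E' = E := by
    have h1 : ∑ u : G, ((B ×ˢ B).filter fun p : G × G => p.1⁻¹ * p.2 = u).card ^ 2
        = (((B ×ˢ B) ×ˢ (B ×ˢ B)).filter fun q : (G × G) × (G × G) =>
            q.1.1⁻¹ * q.1.2 = q.2.1⁻¹ * q.2.2).card :=
      sum_sq_card_fiber_eq (B ×ˢ B) (fun p : G × G => p.1⁻¹ * p.2)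
    have h2 : ∑ u : G, ((B ×ˢ B).filter fun p : G × G => p.1 * p.2⁻¹ = u).card ^ 2
        = (((B ×ˢ B) ×ˢ (B ×ˢ B)).filter fun q : (G × G) × (G × G) =>
            q.1.1 * q.1.2⁻¹ = q.2.1 * q.2.2⁻¹).card :=
      sum_sq_card_fiber_eq (B ×ˢ B) (fun p : G × G => p.1 * p.2⁻¹)
    have hmemiff : ∀ x y z w : G, (x⁻¹ * y = z⁻¹ * w) ↔ (y * w⁻¹ = x * z⁻¹) := by
      intro x y z w
      rw [inv_mul_eq_iff_eq_mul, mul_inv_eq_iff_eq_mul]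
      constructor
      · intro h; rw [h]; group
      · intro h; rw [h]; group
    have hb : (((B ×ˢ B) ×ˢ (B ×ˢ B)).filter fun q : (G × G) × (G × G) =>
            q.1.1⁻¹ * q.1.2 = q.2.1⁻¹ * q.2.2).card
        = (((B ×ˢ B) ×ˢ (B ×ˢ B)).filter fun q : (G × G) × (G × G) =>
            q.1.1 * q.1.2⁻¹ = q.2.1 * q.2.2⁻¹).card := by
      refine Finset.card_nbij'
        (fun q => ((q.1.2, q.2.2), (q.1.1, q.2.1)))
        (fun q => ((q.2.1, q.1.1), (q.2.2, q.1.2))) ?_ ?_ ?_ ?_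
      · rintro ⟨⟨x, y⟩, ⟨z, w⟩⟩ (hq : _ ∈ Finset.filter _ _)
        show _ ∈ Finset.filter _ _
        simp only [Finset.mem_filter, Finset.mem_product] at hq ⊢
        obtain ⟨⟨⟨hx, hy⟩, hz, hw⟩, hcond⟩ := hq
        exact ⟨⟨⟨hy, hw⟩, hx, hz⟩, (hmemiff x y z w).mp hcond⟩
      · rintro ⟨⟨y, w⟩, ⟨x, z⟩⟩ (hq : _ ∈ Finset.filter _ _)
        show _ ∈ Finset.filter _ _
        simp only [Finset.mem_filter, Finset.mem_product] at hq ⊢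
        obtain ⟨⟨⟨hy, hw⟩, hx, hz⟩, hcond⟩ := hq
        exact ⟨⟨⟨hx, hy⟩, hz, hw⟩, (hmemiff x y z w).mpr hcond⟩
      · rintro ⟨⟨x, y⟩, ⟨z, w⟩⟩ _; rfl
      · rintro ⟨⟨y, w⟩, ⟨x, z⟩⟩ _; rfl
    rw [hE', hE]
    have : ∑ u : G, (rB u : ℝ) ^ 2
        = ∑ u : G, (((B ×ˢ B).filter fun p : G × G => p.1 * p.2⁻¹ = u).card : ℝ) ^ 2 := by
      refine Finset.sum_congr rfl fun u _ => ?_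
      rw [hrB u]
    rw [this]
    exact_mod_cast h1.trans (hb.trans h2.symm)
  -- put everything together
  have hE0 : 0 ≤ E := Finset.sum_nonneg fun u _ => sq_nonneg _
  rw [hEE'] at hET
  clear_value n T E' E
  have hkey : n ^ 4 * S ≤ α ^ 4 * E := by
    have h1 : (n ^ 2 * S) ^ 2 ≤ (α ^ 2 * T) ^ 2 :=
      pow_le_pow_left₀ (by positivity) hTlb 2
    have h3 : α ^ 4 * T ^ 2 ≤ α ^ 4 * (E * S) :=
      mul_le_mul_of_nonneg_left hET (by positivity)
    have h4 : (n ^ 4 * S) * S ≤ (α ^ 4 * E) * S := by nlinarith [h1, h3]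
    exact le_of_mul_le_mul_right h4 hSpos
  have hn3 : n ^ 3 ≤ α ^ 4 * β * E := by
    have h5 : n ^ 3 * 1 ≤ n ^ 3 * (β * S * n) :=
      mul_le_mul_of_nonneg_left hβS (by positivity)
    have h6 : β * (n ^ 4 * S) ≤ β * (α ^ 4 * E) :=
      mul_le_mul_of_nonneg_left hkey hβ.le
    calc n ^ 3 = n ^ 3 * 1 := (mul_one _).symm
      _ ≤ n ^ 3 * (β * S * n) := h5
      _ = β * (n ^ 4 * S) := by ring
      _ ≤ β * (α ^ 4 * E) := h6
      _ = α ^ 4 * β * E := by ring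
  rw [div_le_iff₀ (by positivity)]
  have h45 : α ^ 4 * β ≤ 4 * α ^ 9 * β ^ 4 := by
    have hab3 : (1:ℝ) ≤ (α * β) ^ 3 := one_le_pow₀ hαβ
    have hα2 : (1:ℝ) ≤ α ^ 2 := one_le_pow₀ hα
    have hmul : (1:ℝ) ≤ α ^ 2 * (α * β) ^ 3 :=
      le_trans hα2 (le_mul_of_one_le_right (by positivity) hab3)
    have h2 : α ^ 4 * β * 1 ≤ α ^ 4 * β * (α ^ 2 * (α * β) ^ 3) :=
      mul_le_mul_of_nonneg_left hmul (by positivity)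
    have hp : (0:ℝ) ≤ α ^ 9 * β ^ 4 := by positivity
    calc α ^ 4 * β = α ^ 4 * β * 1 := (mul_one _).symm
      _ ≤ α ^ 4 * β * (α ^ 2 * (α * β) ^ 3) := h2
      _ = α ^ 9 * β ^ 4 := by ring
      _ ≤ 4 * α ^ 9 * β ^ 4 := by linarith
  nlinarith [hn3, hE0, mul_le_mul_of_nonneg_right h45 hE0]
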